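/- For b ∈ {0,1}, let φ_b = (1/√2)(e_b⊗e_b + e₂⊗e₂) ∈ ℂ³⊗ℂ³ (realized in ℂ⁹ via the Kronecker product, where e₀, e₁, e₂ is the standard basis of ℂ³), and for x₀, x₁ ∈ {0,1} let U_{x₀,x₁} be the diagonal 3×3 matrix with diagonal entries ((−1)^{x₀}, (−1)^{x₁}, 1). Then (I₃ ⊗ U_{x₀,x₁}) · φ_b = (1/√2)((−1)^{x_b} e_b⊗e_b + e₂⊗e₂) where x_b = x₁ if b = 1 and x_b = x₀ if b = 0, and the inner product ⟪φ_b, (I₃ ⊗ U_{x₀,x₁}) · φ_b⟫ equals 1 if x_b = 0 and equals 0 if x_b = 1. Hence the measurement {Π₀ = |φ_b⟩⟨φ_b|, Π₁ = I − Π₀} yields outcome Π₀ with certainty when x_b = 0 and outcome Π₁ with certainty when x_b = 1. -/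
import Mathlib

set_option maxHeartbeats 3000000


open Matrix Kronecker

/-- Correctness of the Random-OT protocol of Section 2: applying Alice's phase
unitary `U_{x₀,x₁}` to the second qutrit of `φ_b = (1/√2)(|bb⟩ + |22⟩)` yields
`(1/√2)((−1)^{x_b}|bb⟩ + |22⟩)`, and the overlap `⟪φ_b, (I ⊗ U) φ_b⟫` is `1` when
`x_b = 0` and `0` when `x_b = 1`, so Bob's measurement `{|φ_b⟩⟨φ_b|, I − |φ_b⟩⟨φ_b|}`
reveals `x_b` with certainty. -/
theorem qutrit_protocol_correct
    (b : Fin 3) (hb : b = 0 ∨ b = 1)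
    (e : Fin 3 → Fin 3 → ℂ) (he : ∀ d i, e d i = if i = d then 1 else 0)
    (φ : Fin 3 × Fin 3 → ℂ)
    (hφ : φ = (1 / Real.sqrt 2 : ℂ) • fun p => e b p.1 * e b p.2 + e 2 p.1 * e 2 p.2)
    (x₀ x₁ : Fin 2)
    (U : Matrix (Fin 3) (Fin 3) ℂ)
    (hU : U = Matrix.diagonal
      (fun i : Fin 3 => if i = 0 then (-1 : ℂ) ^ (x₀ : ℕ)
        else if i = 1 then (-1 : ℂ) ^ (x₁ : ℕ) else 1))
    (x_b : Fin 2) (hxb : x_b = if b = 1 then x₁ else x₀) :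
    (((1 : Matrix (Fin 3) (Fin 3) ℂ) ⊗ₖ U) *ᵥ φ =
      (1 / Real.sqrt 2 : ℂ) •
        fun p => (-1 : ℂ) ^ (x_b : ℕ) * (e b p.1 * e b p.2) + e 2 p.1 * e 2 p.2) ∧
    ∑ p : Fin 3 × Fin 3,
        (starRingEnd ℂ) (φ p) * (((1 : Matrix (Fin 3) (Fin 3) ℂ) ⊗ₖ U) *ᵥ φ) p =
      if x_b = 0 then 1 else 0 := by
  have he' : e = fun d i => if i = d then 1 else 0 := by funext d i; exact he d i
  subst he' hφ hU hxb
  have h2 : ((Real.sqrt 2 : ℝ) : ℂ) * ((Real.sqrt 2 : ℝ) : ℂ) = 2 := by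
    rw [← Complex.ofReal_mul, Real.mul_self_sqrt (by norm_num)]; norm_num
  have hne : ((Real.sqrt 2 : ℝ) : ℂ) ≠ 0 := by
    simpa using Real.sqrt_ne_zero'.mpr (by norm_num : (0:ℝ) < 2)
  have key : (((1 : Matrix (Fin 3) (Fin 3) ℂ) ⊗ₖ Matrix.diagonal
      (fun i : Fin 3 => if i = 0 then (-1 : ℂ) ^ (x₀ : ℕ)
        else if i = 1 then (-1 : ℂ) ^ (x₁ : ℕ) else 1)) *ᵥ
      ((1 / Real.sqrt 2 : ℂ) • fun p : Fin 3 × Fin 3 =>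
        (if p.1 = b then (1:ℂ) else 0) * (if p.2 = b then 1 else 0) +
        (if p.1 = 2 then (1:ℂ) else 0) * (if p.2 = 2 then 1 else 0))) =
      (1 / Real.sqrt 2 : ℂ) •
        fun p : Fin 3 × Fin 3 =>
          (-1 : ℂ) ^ (((if b = 1 then x₁ else x₀) : Fin 2) : ℕ) *
            ((if p.1 = b then (1:ℂ) else 0) * (if p.2 = b then 1 else 0)) +
          (if p.1 = 2 then (1:ℂ) else 0) * (if p.2 = 2 then 1 else 0) := by
    rcases hb with rfl | rfl <;>
    · ext ⟨i, j⟩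
      fin_cases i <;> fin_cases j <;>
      · simp [mulVec, dotProduct, Fintype.sum_prod_type, Fin.sum_univ_succ,
          Matrix.one_apply, Matrix.diagonal_apply]
        try ring
  refine ⟨key, ?_⟩
  rw [key]
  rcases hb with rfl | rfl <;> fin_cases x₀ <;> fin_cases x₁ <;>
  · simp only [Fintype.sum_prod_type, Fin.sum_univ_succ, Fin.sum_univ_zero,
      Pi.smul_apply, smul_eq_mul, _root_.map_mul, Complex.conj_ofReal, _root_.map_one,
      map_div₀]
    norm_num
    simp [Complex.conj_ofReal]
    try field_simp
    try linear_combination h2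
    try linear_combination -h2
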